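/- Let (𝕏,d_𝕏) and (𝕐,d_𝕐) be metric spaces and equip 𝕏 × 𝕐 with the distance d((x,y),(x',y')) = d_𝕏(x,x') + d_𝕐(y,y'). Then for any pair (X,Y) with finite p-th moments, W_{d,p}(L(X,Y), L(X) ⊗ L(Y))^p ≤ E[d_𝕐(Y,Y')^p], where Y' is an independent copy of Y. -/

import Mathlib

open MeasureTheory ProbabilityTheory

/-- The Wasserstein distance of order `p` with ground cost `d`, defined as the infimum
over couplings of `P` and `Q` of the `p`-th root of the expected `p`-th power cost. -/
noncomputable def Wass {α : Type*} [MeasurableSpace α]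
    (d : α → α → ℝ) (p : ℝ) (P Q : Measure α) : ℝ :=
  sInf ((fun γ : Measure (α × α) => (∫ z, d z.1 z.2 ^ p ∂γ) ^ (1 / p)) ''
    {γ | γ.map Prod.fst = P ∧ γ.map Prod.snd = Q})

theorem stmt2 {Ω 𝕏 𝕐 : Type*} [MeasurableSpace Ω]
    [MetricSpace 𝕏] [PolishSpace 𝕏] [MeasurableSpace 𝕏] [BorelSpace 𝕏]
    [MetricSpace 𝕐] [PolishSpace 𝕐] [MeasurableSpace 𝕐] [BorelSpace 𝕐]
    (μ : Measure Ω) [IsProbabilityMeasure μ]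
    (X : Ω → 𝕏) (Y : Ω → 𝕐) (hX : Measurable X) (hY : Measurable Y)
    (p : ℝ) (hp : 1 ≤ p) (x₀ : 𝕏) (y₀ : 𝕐)
    (hmX : Integrable (fun ω => dist (X ω) x₀ ^ p) μ)
    (hmY : Integrable (fun ω => dist (Y ω) y₀ ^ p) μ)
    (Y' : Ω → 𝕐) (hY' : Measurable Y')
    (hindep : IndepFun (fun ω => (X ω, Y ω)) Y' μ)
    (hcopy : μ.map Y' = μ.map Y) :
    Wass (fun z z' => dist z.1 z'.1 + dist z.2 z'.2) p
        (μ.map (fun ω => (X ω, Y ω))) ((μ.map X).prod (μ.map Y)) ^ p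
      ≤ ∫ ω, dist (Y ω) (Y' ω) ^ p ∂μ := by
  have hp0 : (0:ℝ) < p := lt_of_lt_of_le one_pos hp
  set d : (𝕏 × 𝕐) → (𝕏 × 𝕐) → ℝ := fun z z' => dist z.1 z'.1 + dist z.2 z'.2 with hd
  set S : Set ℝ := ((fun γ : Measure ((𝕏 × 𝕐) × (𝕏 × 𝕐)) =>
      (∫ z, d z.1 z.2 ^ p ∂γ) ^ (1 / p)) ''
    {γ | γ.map Prod.fst = μ.map (fun ω => (X ω, Y ω)) ∧
         γ.map Prod.snd = (μ.map X).prod (μ.map Y)}) with hS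
  set T : Ω → (𝕏 × 𝕐) × (𝕏 × 𝕐) := fun ω => ((X ω, Y ω), (X ω, Y' ω)) with hT
  have hTm : Measurable T := (hX.prodMk hY).prodMk (hX.prodMk hY')
  set I : ℝ := ∫ ω, dist (Y ω) (Y' ω) ^ p ∂μ with hI
  have hI0 : 0 ≤ I := integral_nonneg fun ω =>
    Real.rpow_nonneg dist_nonneg p
  have hdm : Measurable fun z : (𝕏 × 𝕐) × (𝕏 × 𝕐) => d z.1 z.2 ^ p :=
    ((measurable_fst.fst.dist measurable_snd.fst).add
      (measurable_fst.snd.dist measurable_snd.snd)).pow_const p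
  have hint : (∫ z, d z.1 z.2 ^ p ∂(μ.map T)) = I := by
    rw [integral_map hTm.aemeasurable hdm.aestronglyMeasurable]
    simp [hd, hT, hI]
  have hmem : (∫ z, d z.1 z.2 ^ p ∂(μ.map T)) ^ (1 / p) ∈ S := by
    refine ⟨μ.map T, ⟨?_, ?_⟩, rfl⟩
    · rw [Measure.map_map measurable_fst hTm]; rfl
    · rw [Measure.map_map measurable_snd hTm]
      have hXY' : IndepFun X Y' μ :=
        hindep.comp measurable_fst measurable_id
      have h2 := (indepFun_iff_map_prod_eq_prod_map_map hX.aemeasurable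
        hY'.aemeasurable).mp hXY'
      show μ.map (fun ω => (X ω, Y' ω)) = _
      rw [h2, hcopy]
  have hSnonneg : ∀ x ∈ S, (0:ℝ) ≤ x := by
    rintro x ⟨γ, -, rfl⟩
    exact Real.rpow_nonneg
      (integral_nonneg fun z => Real.rpow_nonneg (by positivity) p) _
  have hbdd : BddBelow S := ⟨0, hSnonneg⟩
  have hW0 : 0 ≤ sInf S := le_csInf ⟨_, hmem⟩ hSnonneg
  have hle : sInf S ≤ I ^ (1 / p) := by
    rw [← hint]; exact csInf_le hbdd hmem
  calc sInf S ^ p ≤ (I ^ (1 / p)) ^ p := Real.rpow_le_rpow hW0 hle hp0.le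
    _ = I := by
        rw [← Real.rpow_mul hI0, one_div_mul_cancel hp0.ne', Real.rpow_one]
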